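/- Let X be a compact Hausdorff space, E a Banach space over 𝕂 ∈ {ℝ, ℂ}, and A a closed 𝕂-linear subspace of C(X,E). Let x ∈ Θ(A) and f ∈ A with ‖f‖_∞ = 1 and f(x) = 0. Then for every u ∈ S(E) and every r with 0 < r < 1 there exists g ∈ V^A_{x,{u}} such that rf + g ∈ V^A_{x,{u}}; that is, there exists g ∈ A with g(x) = u, ‖g‖_∞ = 1 and ‖rf + g‖_∞ = 1. -/

import Mathlib

open Set Metric

variable {𝕂 : Type*} [RCLike 𝕂]
variable {X : Type*} [TopologicalSpace X] [CompactSpace X] [T2Space X]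
variable {E : Type*} [NormedAddCommGroup E] [NormedSpace ℝ E] [NormedSpace 𝕂 E]
  [IsScalarTower ℝ 𝕂 E] [CompleteSpace E]

/-- The set `V^A_{x,K} = {f ∈ S(A) : f(x) ∈ K}`. -/
def Vset (A : Subspace 𝕂 C(X, E)) (x : X) (K : Set E) : Set C(X, E) :=
  {f | f ∈ A ∧ ‖f‖ = 1 ∧ f x ∈ K}

/-- The set `Θ(A)` of strong boundary points of a set `A` of functions in `C(X,E)`. -/
def strongBoundaryPoints (A : Set C(X, E)) : Set X :=
  {x | ∀ U ∈ nhds x, ∀ ε : ℝ, 0 < ε → ∀ u : E, ‖u‖ = 1 →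
    ∃ f ∈ A, ‖f‖ = 1 ∧ f x = u ∧ ∀ y, y ∉ U → ‖f y‖ < ε}

lemma geom_aux : HasSum (fun n : ℕ => ((1:ℝ)/2) ^ (n + 1)) 1 := by
  have h := (hasSum_geometric_of_lt_one (by norm_num : (0:ℝ) ≤ 1/2)
    (by norm_num : (1:ℝ)/2 < 1)).mul_left ((1:ℝ)/2)
  have : ∀ n : ℕ, (1:ℝ)/2 * (1/2) ^ n = (1/2) ^ (n + 1) := fun n => (pow_succ' _ _).symm
  simp only [this] at h
  convert h using 1
  · rfl
  norm_num

lemma finGeom_aux (N : ℕ) :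
    ∑ n ∈ Finset.range N, ((1:ℝ)/2) ^ (n + 1) = 1 - (1/2) ^ N := by
  induction N with
  | zero => simp
  | succ m ih =>
    rw [Finset.sum_range_succ, ih]
    ring

/-- Additive Bishop-type lemma: if `x` is a strong boundary point of a closed
subspace `A`, `f ∈ A` with `‖f‖ = 1` and `f x = 0`, then for each unit vector
`u` and each `0 < r < 1` there is `g ∈ V^A_{x,{u}}` with `r • f + g ∈ V^A_{x,{u}}`. -/
theorem stmt5 (A : Subspace 𝕂 C(X, E)) (hA : IsClosed (A : Set C(X, E)))
    (x : X) (hx : x ∈ strongBoundaryPoints (A : Set C(X, E)))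
    (f : C(X, E)) (hf : f ∈ A) (hf1 : ‖f‖ = 1) (hfx : f x = 0)
    (u : E) (hu : ‖u‖ = 1) (r : ℝ) (hr0 : 0 < r) (hr1 : r < 1) :
    ∃ g ∈ Vset A x {u}, r • f + g ∈ Vset A x {u} := by
  have hε : (0:ℝ) < 1 - r := by linarith
  have hnhds : ∀ n : ℕ, {y : X | ‖f y‖ < ((1:ℝ)/2) ^ (n + 1)} ∈ nhds x := by
    intro n
    have hop : IsOpen {y : X | ‖f y‖ < ((1:ℝ)/2) ^ (n + 1)} :=
      isOpen_lt (f.continuous.norm) continuous_const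
    exact hop.mem_nhds (by simp only [Set.mem_setOf_eq, hfx, norm_zero]; positivity)
  choose h hmem h1 hhx hsmall using fun n : ℕ => hx _ (hnhds n) (1 - r) hε u hu
  -- the series
  set F : ℕ → C(X, E) := fun n => (((1:ℝ)/2) ^ (n + 1)) • h n with hF
  have hFnorm : ∀ n, ‖F n‖ = ((1:ℝ)/2) ^ (n + 1) := by
    intro n
    rw [hF]
    simp only [norm_smul, Real.norm_eq_abs, h1 n, mul_one]
    rw [abs_of_pos (by positivity)]
  have hFsummable : Summable F := by
    apply Summable.of_norm
    simp only [hFnorm]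
    exact geom_aux.summable
  set g : C(X, E) := ∑' n, F n with hg
  have hgsum : HasSum F g := hFsummable.hasSum
  -- membership of the sum in A
  have hFmem : ∀ n, F n ∈ A := fun n => A.smul_of_tower_mem _ (hmem n)
  have hgA : g ∈ A := by
    refine hA.mem_of_tendsto hgsum.tendsto_sum_nat
      (Filter.Eventually.of_forall fun N => ?_)
    exact A.sum_mem fun i _ => hFmem i
  -- pointwise sums
  have hgy : ∀ y : X, HasSum (fun n => (((1:ℝ)/2) ^ (n + 1)) • h n y) (g y) := by
    intro y
    have := (ContinuousMap.evalCLM ℝ y).hasSum hgsum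
    simpa [hF, ContinuousMap.evalCLM] using this
  -- value at x
  have hgx : g x = u := by
    have h2 : HasSum (fun n => (((1:ℝ)/2) ^ (n + 1)) • u) ((1:ℝ) • u) :=
      geom_aux.smul_const u
    have h3 := hgy x
    simp only [hhx] at h3
    have := h3.unique h2
    simpa using this
  -- norm of g
  have hgnorm_le : ‖g‖ ≤ 1 := by
    have := norm_tsum_le_tsum_norm (f := F) (by
      simp only [hFnorm]; exact geom_aux.summable)
    rw [← hg] at this
    calc ‖g‖ ≤ ∑' n, ‖F n‖ := this
      _ = 1 := by simp only [hFnorm]; exact geom_aux.tsum_eq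
  have hgnorm : ‖g‖ = 1 := by
    refine le_antisymm hgnorm_le ?_
    calc (1:ℝ) = ‖g x‖ := by rw [hgx, hu]
      _ ≤ ‖g‖ := g.norm_coe_le_norm x
  -- key pointwise estimate
  have key : ∀ y : X, r * ‖f y‖ + ‖g y‖ ≤ 1 := by
    intro y
    by_cases hc : ∃ n : ℕ, ((1:ℝ)/2) ^ (n + 1) ≤ ‖f y‖
    · set N := Nat.find hc with hNdef
      have hNspec : ((1:ℝ)/2) ^ (N + 1) ≤ ‖f y‖ := Nat.find_spec hc
      have hfyN : ‖f y‖ ≤ ((1:ℝ)/2) ^ N := by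
        rcases Nat.eq_zero_or_pos N with hN0 | hNpos
        · rw [hN0, pow_zero]
          calc ‖f y‖ ≤ ‖f‖ := f.norm_coe_le_norm y
            _ = 1 := hf1
        · obtain ⟨m, hm⟩ := Nat.exists_eq_succ_of_ne_zero hNpos.ne'
          have := Nat.find_min hc (m := m) (by omega)
          push_neg at this
          rw [hm]
          exact this.le
      have hsm : ∀ n, N ≤ n → ‖h n y‖ ≤ 1 - r := by
        intro n hn
        refine (hsmall n y ?_).le
        simp only [Set.mem_setOf_eq, not_lt]
        calc ((1:ℝ)/2) ^ (n + 1) ≤ ((1:ℝ)/2) ^ (N + 1) := by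
              apply pow_le_pow_of_le_one (by norm_num) (by norm_num); omega
          _ ≤ ‖f y‖ := hNspec
      -- bound sequence
      set b : ℕ → ℝ := fun n => ((1:ℝ)/2) ^ (n + 1) * (if n < N then 1 else (1 - r))
        with hb
      have hbsum : HasSum b (1 - r * ((1:ℝ)/2) ^ N) := by
        have hsplit : ∀ n, b n = (1 - r) * ((1:ℝ)/2) ^ (n + 1)
            + (if n < N then r * ((1:ℝ)/2) ^ (n + 1) else 0) := by
          intro n
          rw [hb]
          by_cases hn : n < N <;> simp [hn] <;> ring
        have h1s : HasSum (fun n => (1 - r) * ((1:ℝ)/2) ^ (n + 1)) ((1 - r) * 1) :=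
          geom_aux.mul_left (1 - r)
        have h2s := hasSum_sum_of_ne_finset_zero (L := SummationFilter.unconditional ℕ) (s := Finset.range N)
            (f := fun n => if n < N then r * ((1:ℝ)/2) ^ (n + 1) else 0)
            (by intro n hn; simp only [Finset.mem_range] at hn; simp [hn])
        have hsum2 : (∑ n ∈ Finset.range N, if n < N then r * ((1:ℝ)/2) ^ (n + 1) else 0)
            = r * (1 - ((1:ℝ)/2) ^ N) := by
          rw [Finset.sum_ite_of_true (fun n hn => Finset.mem_range.mp hn),
            ← Finset.mul_sum, finGeom_aux]
        rw [hsum2] at h2s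
        have := h1s.add h2s
        simp only [← hsplit] at this
        convert this using 1
        ring
      have hgyb : ‖g y‖ ≤ 1 - r * ((1:ℝ)/2) ^ N := by
        have hle : ∀ n, ‖(((1:ℝ)/2) ^ (n + 1)) • h n y‖ ≤ b n := by
          intro n
          rw [norm_smul, Real.norm_eq_abs, abs_of_pos (by positivity), hb]
          rcases Nat.lt_or_ge n N with hn | hn
          · simp only [hn, if_true, mul_one]
            have : ‖h n y‖ ≤ 1 := by
              calc ‖h n y‖ ≤ ‖h n‖ := (h n).norm_coe_le_norm y
                _ = 1 := h1 n
            nlinarith [pow_pos (by norm_num : (0:ℝ) < 1/2) (n+1)]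
          · simp only [Nat.not_lt.mpr hn, if_false]
            have := hsm n hn
            nlinarith [pow_pos (by norm_num : (0:ℝ) < 1/2) (n+1)]
        calc ‖g y‖ = ‖∑' n, (((1:ℝ)/2) ^ (n + 1)) • h n y‖ := by rw [(hgy y).tsum_eq]
          _ ≤ ∑' n, ‖(((1:ℝ)/2) ^ (n + 1)) • h n y‖ := by
              apply norm_tsum_le_tsum_norm
              exact hbsum.summable.of_nonneg_of_le (fun n => norm_nonneg _) hle
          _ ≤ ∑' n, b n := by
              apply Summable.tsum_le_tsum hle
              · exact hbsum.summable.of_nonneg_of_le (fun n => norm_nonneg _) hle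
              · exact hbsum.summable
          _ = 1 - r * ((1:ℝ)/2) ^ N := hbsum.tsum_eq
      nlinarith
    · push_neg at hc
      have hfy0 : ‖f y‖ = 0 := by
        by_contra h0
        have hpos : 0 < ‖f y‖ := lt_of_le_of_ne (norm_nonneg _) (Ne.symm h0)
        obtain ⟨n, hn⟩ := exists_pow_lt_of_lt_one hpos (by norm_num : (1:ℝ)/2 < 1)
        have : ((1:ℝ)/2) ^ (n + 1) ≤ ((1:ℝ)/2) ^ n :=
          pow_le_pow_of_le_one (by norm_num) (by norm_num) (by omega)
        exact absurd (this.trans hn.le) (not_le.mpr (hc n))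
      have : ‖g y‖ ≤ 1 := le_trans (g.norm_coe_le_norm y) hgnorm_le
      rw [hfy0]
      linarith
  -- the combined function
  have hsumA : r • f + g ∈ A := A.add_mem (A.smul_of_tower_mem r hf) hgA
  have hsumx : (r • f + g) x = u := by
    simp [hfx, hgx]
  have hsumnorm : ‖r • f + g‖ = 1 := by
    refine le_antisymm ?_ ?_
    · refine (ContinuousMap.norm_le _ zero_le_one).mpr fun y => ?_
      calc ‖(r • f + g) y‖ = ‖r • f y + g y‖ := rfl
        _ ≤ ‖r • f y‖ + ‖g y‖ := norm_add_le _ _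
        _ = r * ‖f y‖ + ‖g y‖ := by
            rw [norm_smul, Real.norm_eq_abs, abs_of_pos hr0]
        _ ≤ 1 := key y
    · calc (1:ℝ) = ‖(r • f + g) x‖ := by rw [hsumx, hu]
        _ ≤ ‖r • f + g‖ := (r • f + g).norm_coe_le_norm x
  exact ⟨g, ⟨hgA, hgnorm, by simp [hgx]⟩, hsumA, hsumnorm, by simp [hsumx]⟩
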